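/- Let ε ∈ (−1,1) and c ∈ ℝ, and define g : (−1,1) → ℝ by g(t) = c/(1−εt)². Then g solves the linearized pure-swirl eigenvalue ODE: for every t ∈ (−1,1), −(1−t²)g''(t) + 4t g'(t) + (2ε(1−t²)/(1−εt))·g'(t) + (−4εt/(1−εt) − 2(1−ε²)/(1−εt)² + 2)·g(t) = 0. -/

import Mathlib

noncomputable section

lemma swirl_hasDerivAt1 (ε c : ℝ) {s : ℝ} (hs : 1 - ε * s ≠ 0) :
    HasDerivAt (fun s : ℝ => c / (1 - ε * s) ^ 2) (2 * c * ε / (1 - ε * s) ^ 3) s := by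
  have h1 : HasDerivAt (fun s : ℝ => 1 - ε * s) (-ε) s := by
    simpa using ((hasDerivAt_id s).const_mul ε).const_sub 1
  have h2 := h1.pow 2
  have h := (hasDerivAt_const s c).div h2 (pow_ne_zero 2 hs)
  refine h.congr_deriv ?_
  simp only [Pi.pow_apply]
  field_simp
  ring

lemma swirl_hasDerivAt2 (ε c : ℝ) {s : ℝ} (hs : 1 - ε * s ≠ 0) :
    HasDerivAt (fun s : ℝ => 2 * c * ε / (1 - ε * s) ^ 3) (6 * c * ε ^ 2 / (1 - ε * s) ^ 4) s := by
  have h1 : HasDerivAt (fun s : ℝ => 1 - ε * s) (-ε) s := by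
    simpa using ((hasDerivAt_id s).const_mul ε).const_sub 1
  have h3 := h1.pow 3
  have h := (hasDerivAt_const s (2 * c * ε)).div h3 (pow_ne_zero 3 hs)
  refine h.congr_deriv ?_
  simp only [Pi.pow_apply]
  field_simp
  ring

/-- The explicit regular solution `g(t) = c/(1−εt)²` solves the linearized pure-swirl
eigenvalue ODE
`−(1−t²)g'' + 4t g' + (2ε(1−t²)/(1−εt)) g' + (−4εt/(1−εt) − 2(1−ε²)/(1−εt)² + 2) g = 0`
on `(−1,1)`. -/
theorem pure_swirl_ODE_solution (ε : ℝ) (hε : ε ∈ Set.Ioo (-1 : ℝ) 1) (c : ℝ) :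
    ∀ t ∈ Set.Ioo (-1 : ℝ) 1,
      -(1 - t ^ 2) * deriv (deriv (fun s : ℝ => c / (1 - ε * s) ^ 2)) t
        + 4 * t * deriv (fun s : ℝ => c / (1 - ε * s) ^ 2) t
        + (2 * ε * (1 - t ^ 2) / (1 - ε * t)) * deriv (fun s : ℝ => c / (1 - ε * s) ^ 2) t
        + (-4 * ε * t / (1 - ε * t) - 2 * (1 - ε ^ 2) / (1 - ε * t) ^ 2 + 2)
            * (c / (1 - ε * t) ^ 2) = 0 := by
  obtain ⟨hε1, hε2⟩ := hε
  intro t ht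
  obtain ⟨ht1, ht2⟩ := ht
  have h0 : 1 - ε * t ≠ 0 := by nlinarith [abs_nonneg ε, abs_nonneg t]
  have hcont : ContinuousAt (fun s : ℝ => 1 - ε * s) t := by fun_prop
  have hnb : ∀ᶠ s in nhds t, 1 - ε * s ≠ 0 := hcont.eventually_ne h0
  have hdf : deriv (fun s : ℝ => c / (1 - ε * s) ^ 2)
      =ᶠ[nhds t] fun s => 2 * c * ε / (1 - ε * s) ^ 3 :=
    hnb.mono fun s hs => (swirl_hasDerivAt1 ε c hs).deriv
  have hd1 : deriv (fun s : ℝ => c / (1 - ε * s) ^ 2) t = 2 * c * ε / (1 - ε * t) ^ 3 :=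
    (swirl_hasDerivAt1 ε c h0).deriv
  have hd2 : deriv (deriv (fun s : ℝ => c / (1 - ε * s) ^ 2)) t
      = 6 * c * ε ^ 2 / (1 - ε * t) ^ 4 := by
    rw [hdf.deriv_eq]
    exact (swirl_hasDerivAt2 ε c h0).deriv
  rw [hd1, hd2]
  have h0' : 1 - t * ε ≠ 0 := by rwa [mul_comm t ε]
  field_simp
  ring
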